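/- Let n ≥ 1 and let A be a retract of McN([0,1]ⁿ) that separates points of [0,1]ⁿ, i.e., for all distinct x, y ∈ [0,1]ⁿ there exists f ∈ A with f(x) ≠ f(y). Then A = McN([0,1]ⁿ). Moreover, if σ ≠ τ are Z-retractions of [0,1]ⁿ with R_σ = R_τ, then the associated retracts A_σ and A_τ are incomparable: neither A_σ ⊆ A_τ nor A_τ ⊆ A_σ. -/

import Mathlib

open Set MeasureTheory

/-- The unit cube `[0,1]^n` in `ℝ^n`. -/
def cubeSet (n : ℕ) : Set (Fin n → ℝ) := Set.Icc 0 1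

/-- A point all of whose coordinates are rational. -/
def IsRationalPoint {n : ℕ} (v : Fin n → ℝ) : Prop := ∀ i, ∃ q : ℚ, v i = (q : ℝ)

/-- A rational polyhedron: a finite union of convex hulls of finite sets of rational points. -/
def IsRationalPolyhedron {n : ℕ} (P : Set (Fin n → ℝ)) : Prop :=
  ∃ S : Finset (Finset (Fin n → ℝ)),
    (∀ F ∈ S, ∀ v ∈ F, IsRationalPoint v) ∧
    P = ⋃ F ∈ S, convexHull ℝ (F : Set (Fin n → ℝ))

/-- An affine map `x ↦ Mx + b` with integer matrix `M` and integer vector `b`. -/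
def IsIntAffine {n m : ℕ} (g : (Fin n → ℝ) → (Fin m → ℝ)) : Prop :=
  ∃ (M : Fin m → Fin n → ℤ) (b : Fin m → ℤ),
    ∀ x i, g x i = (∑ j, (M i j : ℝ) * x j) + (b i : ℝ)

/-- A Z-map on `P`: continuous on `P`, with finitely many integer affine pieces. -/
def IsZMapOn {n m : ℕ} (P : Set (Fin n → ℝ)) (f : (Fin n → ℝ) → (Fin m → ℝ)) : Prop :=
  ContinuousOn f P ∧
  ∃ (k : ℕ) (g : Fin k → (Fin n → ℝ) → (Fin m → ℝ)),
    (∀ i, IsIntAffine (g i)) ∧ ∀ x ∈ P, ∃ i, f x = g i x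

/-- `f` restricted to `P` is a Z-homeomorphism of `P` onto `Q`. -/
def IsZHomeoOnto {n m : ℕ} (P : Set (Fin n → ℝ)) (Q : Set (Fin m → ℝ))
    (f : (Fin n → ℝ) → (Fin m → ℝ)) : Prop :=
  IsZMapOn P f ∧ f '' P = Q ∧ Set.InjOn f P ∧
  ∃ g : (Fin m → ℝ) → (Fin n → ℝ),
    IsZMapOn Q g ∧ (∀ x ∈ P, g (f x) = x) ∧ (∀ y ∈ Q, f (g y) = y)

/-- A Z-retraction of the cube `[0,1]^n`. -/
def IsZRetraction {n : ℕ} (σ : (Fin n → ℝ) → (Fin n → ℝ)) : Prop :=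
  IsZMapOn (cubeSet n) σ ∧ Set.MapsTo σ (cubeSet n) (cubeSet n) ∧
  ∀ x ∈ cubeSet n, σ (σ x) = σ x

/-- The range `R_σ = σ([0,1]^n)` of a Z-retraction. -/
def zRange {n : ℕ} (σ : (Fin n → ℝ) → (Fin n → ℝ)) : Set (Fin n → ℝ) := σ '' cubeSet n

/-- A Z-homeomorphism domain for `σ`: a rational polyhedron `Q ⊆ [0,1]^n` such that
`σ` restricted to `Q` is a Z-homeomorphism of `Q` onto `R_σ`. -/
def IsZHomeoDomain {n : ℕ} (σ : (Fin n → ℝ) → (Fin n → ℝ)) (Q : Set (Fin n → ℝ)) : Prop :=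
  IsRationalPolyhedron Q ∧ Q ⊆ cubeSet n ∧ IsZHomeoOnto Q (zRange σ) σ

/-- A (Kuratowski) closed domain: `D` equals the closure of its interior. -/
def IsClosedDomain {n : ℕ} (D : Set (Fin n → ℝ)) : Prop :=
  closure (interior D) = D

/-- A scalar integer affine map. -/
def IsIntAffine1 {n : ℕ} (g : (Fin n → ℝ) → ℝ) : Prop :=
  ∃ (m : Fin n → ℤ) (b : ℤ), ∀ x, g x = (∑ j, (m j : ℝ) * x j) + (b : ℝ)

/-- A scalar Z-map on `P`. -/
def IsZMapOn1 {n : ℕ} (P : Set (Fin n → ℝ)) (f : (Fin n → ℝ) → ℝ) : Prop :=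
  ContinuousOn f P ∧
  ∃ (k : ℕ) (g : Fin k → (Fin n → ℝ) → ℝ),
    (∀ i, IsIntAffine1 (g i)) ∧ ∀ x ∈ P, ∃ i, f x = g i x

/-- The free MV-algebra `McN([0,1]^n)`, viewed as a set of functions on the cube. -/
def McN (n : ℕ) : Set (↥(cubeSet n) → ℝ) :=
  { f | (∀ x, f x ∈ Set.Icc (0:ℝ) 1) ∧
    ∃ g : (Fin n → ℝ) → ℝ, IsZMapOn1 (cubeSet n) g ∧ ∀ x : ↥(cubeSet n), f x = g x.1 }

/-- Pointwise MV-sum `f ⊕ g = min(f + g, 1)`. -/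
def mvAdd {X : Type*} (f g : X → ℝ) : X → ℝ := fun x => min (f x + g x) 1

/-- Pointwise MV-negation `¬f = 1 - f`. -/
def mvNeg {X : Type*} (f : X → ℝ) : X → ℝ := fun x => 1 - f x

/-- The retract `A_σ = {g ∘ σ : g ∈ McN([0,1]^n)}` associated with a Z-retraction `σ`. -/
def retAlg {n : ℕ} (σ : (Fin n → ℝ) → (Fin n → ℝ)) : Set (↥(cubeSet n) → ℝ) :=
  { f | ∃ g ∈ McN n, ∀ (x : ↥(cubeSet n)) (h : σ x.1 ∈ cubeSet n), f x = g ⟨σ x.1, h⟩ }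

/-- `ε` is a retraction of `McN([0,1]^n)` onto `A`. -/
def IsMcNRetraction {n : ℕ} (ε : ↥(McN n) → ↥(McN n)) (A : Set (↥(cubeSet n) → ℝ)) : Prop :=
  (∀ (f g : ↥(McN n)) (h : mvAdd f.1 g.1 ∈ McN n),
      (ε ⟨mvAdd f.1 g.1, h⟩).1 = mvAdd (ε f).1 (ε g).1) ∧
  (∀ (f : ↥(McN n)) (h : mvNeg f.1 ∈ McN n),
      (ε ⟨mvNeg f.1, h⟩).1 = mvNeg (ε f).1) ∧
  (∀ f, ε (ε f) = ε f) ∧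
  Subtype.val '' Set.range ε = A

/-- An MV-isomorphism between two sets of `[0,1]`-valued functions. -/
def IsMVIsoFun {X Y : Type*} (A : Set (X → ℝ)) (B : Set (Y → ℝ)) (h : ↥A → ↥B) : Prop :=
  Function.Bijective h ∧
  (∀ (f g : ↥A) (hm : mvAdd f.1 g.1 ∈ A),
      (h ⟨mvAdd f.1 g.1, hm⟩).1 = mvAdd (h f).1 (h g).1) ∧
  (∀ (f : ↥A) (hm : mvNeg f.1 ∈ A),
      (h ⟨mvNeg f.1, hm⟩).1 = mvNeg (h f).1)

namespace Stmt19Aux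

lemma intAffine1_const {n : ℕ} (c : ℤ) :
    IsIntAffine1 (fun _ : Fin n → ℝ => (c : ℝ)) := by
  refine ⟨0, c, fun x => ?_⟩
  simp

lemma intAffine1_add {n : ℕ} {g₁ g₂ : (Fin n → ℝ) → ℝ}
    (h₁ : IsIntAffine1 g₁) (h₂ : IsIntAffine1 g₂) :
    IsIntAffine1 (fun x => g₁ x + g₂ x) := by
  obtain ⟨m₁, b₁, e₁⟩ := h₁
  obtain ⟨m₂, b₂, e₂⟩ := h₂
  refine ⟨m₁ + m₂, b₁ + b₂, fun x => ?_⟩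
  simp only [e₁, e₂, Pi.add_apply]
  push_cast
  rw [Finset.sum_congr rfl (fun j _ => add_mul ((m₁ j : ℝ)) ((m₂ j : ℝ)) (x j)),
    Finset.sum_add_distrib]
  ring

lemma intAffine1_neg {n : ℕ} {g : (Fin n → ℝ) → ℝ} (h : IsIntAffine1 g) :
    IsIntAffine1 (fun x => 1 - g x) := by
  obtain ⟨m, b, e⟩ := h
  refine ⟨-m, 1 - b, fun x => ?_⟩
  simp only [e, Pi.neg_apply]
  push_cast
  rw [Finset.sum_congr rfl (fun j _ => (neg_mul ((m j : ℝ)) (x j))),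
    Finset.sum_neg_distrib]
  ring

lemma zmap1_of_fintype {n : ℕ} {P : Set (Fin n → ℝ)} {f : (Fin n → ℝ) → ℝ}
    {ι : Type} [Fintype ι] (hc : ContinuousOn f P)
    (g : ι → (Fin n → ℝ) → ℝ) (hg : ∀ i, IsIntAffine1 (g i))
    (hx : ∀ x ∈ P, ∃ i, f x = g i x) : IsZMapOn1 P f := by
  refine ⟨hc, Fintype.card ι, fun j => g ((Fintype.equivFin ι).symm j),
    fun j => hg _, fun x hxP => ?_⟩
  obtain ⟨i, hi⟩ := hx x hxP
  exact ⟨Fintype.equivFin ι i, by simpa using hi⟩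

lemma zero_mem (n : ℕ) : (fun _ : ↥(cubeSet n) => (0 : ℝ)) ∈ McN n := by
  refine ⟨fun _ => by norm_num, fun _ => 0, ?_, fun _ => rfl⟩
  exact zmap1_of_fintype (ι := Unit) continuousOn_const (fun _ _ => (0 : ℝ))
    (fun _ => by simpa using intAffine1_const (n := n) 0) (fun x _ => ⟨(), rfl⟩)

lemma neg_mem {n : ℕ} {f : ↥(cubeSet n) → ℝ} (hf : f ∈ McN n) : mvNeg f ∈ McN n := by
  obtain ⟨hb, g, ⟨hc, k, gp, hgp, hpt⟩, he⟩ := hf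
  refine ⟨fun x => ?_, fun x => 1 - g x, ⟨?_, k, fun i x => 1 - gp i x, ?_, ?_⟩, ?_⟩
  · have := hb x
    simp only [mvNeg, Set.mem_Icc] at *
    constructor <;> linarith [this.1, this.2]
  · exact continuousOn_const.sub hc
  · exact fun i => intAffine1_neg (hgp i)
  · intro x hxP
    obtain ⟨i, hi⟩ := hpt x hxP
    exact ⟨i, by dsimp only; rw [hi]⟩
  · intro x
    simp [mvNeg, he x]

lemma add_mem {n : ℕ} {f₁ f₂ : ↥(cubeSet n) → ℝ} (h₁ : f₁ ∈ McN n) (h₂ : f₂ ∈ McN n) :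
    mvAdd f₁ f₂ ∈ McN n := by
  obtain ⟨hb₁, g₁, ⟨hc₁, k₁, gp₁, hgp₁, hpt₁⟩, he₁⟩ := h₁
  obtain ⟨hb₂, g₂, ⟨hc₂, k₂, gp₂, hgp₂, hpt₂⟩, he₂⟩ := h₂
  refine ⟨fun x => ?_, fun x => min (g₁ x + g₂ x) 1, ?_, ?_⟩
  · have u₁ := hb₁ x; have u₂ := hb₂ x
    simp only [mvAdd, Set.mem_Icc] at *
    constructor
    · exact le_min (by linarith [u₁.1, u₂.1]) (by norm_num)
    · exact min_le_right _ _
  · refine zmap1_of_fintype (ι := Option (Fin k₁ × Fin k₂))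
      ((hc₁.add hc₂).inf continuousOn_const) (fun o => o.elim (fun _ => (1 : ℝ))
        (fun p x => gp₁ p.1 x + gp₂ p.2 x)) ?_ ?_
    · rintro (_ | ⟨i, j⟩)
      · simpa using intAffine1_const (n := n) 1
      · exact intAffine1_add (hgp₁ i) (hgp₂ j)
    · intro x hxP
      obtain ⟨i, hi⟩ := hpt₁ x hxP
      obtain ⟨j, hj⟩ := hpt₂ x hxP
      rcases le_total (g₁ x + g₂ x) 1 with h | h
      · refine ⟨some (i, j), ?_⟩
        dsimp only [Option.elim]
        rw [min_eq_left h, hi, hj]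
      · refine ⟨none, ?_⟩
        dsimp only [Option.elim]
        rw [min_eq_right h]
  · intro x
    simp [mvAdd, he₁ x, he₂ x]

lemma proj_mem {n : ℕ} (i : Fin n) : (fun z : ↥(cubeSet n) => z.1 i) ∈ McN n := by
  refine ⟨fun z => ?_, fun x => x i, ?_, fun _ => rfl⟩
  · have hz := z.2
    simp only [cubeSet, Set.mem_Icc] at hz
    exact ⟨hz.1 i, hz.2 i⟩
  · refine zmap1_of_fintype (ι := Unit) (continuous_apply i).continuousOn
      (fun _ x => x i) (fun _ => ?_) (fun x _ => ⟨(), rfl⟩)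
    refine ⟨fun j => if j = i then 1 else 0, 0, fun x => ?_⟩
    simp [apply_ite (fun z : ℤ => (z : ℝ)), ite_mul, Finset.sum_ite_eq']

lemma mcn_continuous {n : ℕ} {f : ↥(cubeSet n) → ℝ} (hf : f ∈ McN n) : Continuous f := by
  obtain ⟨_, g, ⟨hc, _⟩, he⟩ := hf
  have : f = (cubeSet n).restrict g := funext he
  rw [this]
  exact continuousOn_iff_continuous_restrict.mp hc

lemma cube_compactSpace (n : ℕ) : CompactSpace ↥(cubeSet n) :=
  isCompact_iff_compactSpace.mp (by exact isCompact_Icc)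

lemma cube_nonempty (n : ℕ) : Nonempty ↥(cubeSet n) :=
  ⟨0, Set.mem_Icc.mpr ⟨le_refl _, zero_le_one⟩⟩

end Stmt19Aux
namespace Stmt19Aux

/-- Real identity for the doubling step. -/
lemma L1 (t : ℝ) (k a : ℕ) (ha : a < 2 ^ k) :
    min (max ((2:ℝ) ^ k * min (t + t) 1 - a) 0) 1
      = min (max ((2:ℝ) ^ (k + 1) * t - a) 0) 1 := by
  have hpow : (0:ℝ) < 2 ^ k := by positivity
  have ha' : (a : ℝ) + 1 ≤ (2:ℝ) ^ k := by
    have : (a : ℝ) + 1 ≤ ((2 ^ k : ℕ) : ℝ) := by exact_mod_cast Nat.succ_le_of_lt ha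
    simpa [Nat.cast_pow] using this
  rcases le_total (t + t) 1 with h | h
  · rw [min_eq_left h]
    congr 2
    ring
  · rw [min_eq_right h]
    have h1 : (1:ℝ) ≤ (2:ℝ) ^ k * 1 - a := by linarith
    have h2 : (2:ℝ) ^ k * 1 ≤ (2:ℝ) ^ (k+1) * t := by
      have : (2:ℝ) ^ (k+1) * t = (2:ℝ) ^ k * (t + t) := by ring
      rw [this]
      exact mul_le_mul_of_nonneg_left h hpow.le
    rw [max_eq_left (by linarith), max_eq_left (by linarith),
      min_eq_right (by linarith), min_eq_right (by linarith)]

/-- Real identity for the shifted doubling step. -/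
lemma L2 (t : ℝ) (k a' : ℕ) :
    min (max ((2:ℝ) ^ k * (1 - min ((1 - t) + (1 - t)) 1) - a') 0) 1
      = min (max ((2:ℝ) ^ (k + 1) * t - ((2:ℝ) ^ k + a')) 0) 1 := by
  have hpow : (0:ℝ) < 2 ^ k := by positivity
  have ha'0 : (0:ℝ) ≤ (a' : ℝ) := Nat.cast_nonneg _
  rcases le_total (t + t) 1 with h | h
  · have hmin : min ((1 - t) + (1 - t)) 1 = 1 := min_eq_right (by linarith)
    rw [hmin]
    have hL : max ((2:ℝ) ^ k * (1 - 1) - a') 0 = 0 := max_eq_right (by simp)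
    have h2 : (2:ℝ) ^ (k+1) * t ≤ (2:ℝ) ^ k := by
      have : (2:ℝ) ^ (k+1) * t = (2:ℝ) ^ k * (t + t) := by ring
      rw [this]
      calc (2:ℝ) ^ k * (t + t) ≤ (2:ℝ) ^ k * 1 := mul_le_mul_of_nonneg_left h hpow.le
        _ = (2:ℝ) ^ k := mul_one _
    have hR : max ((2:ℝ) ^ (k+1) * t - ((2:ℝ) ^ k + a')) 0 = 0 :=
      max_eq_right (by linarith)
    rw [hL, hR]
  · have hmin : min ((1 - t) + (1 - t)) 1 = (1 - t) + (1 - t) := min_eq_left (by linarith)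
    rw [hmin]
    congr 2
    ring

/-- Every MV-homomorphism `McN n → [0,1]` is evaluation at a point of the cube. -/
lemma exists_point {n : ℕ} (χ : ↥(McN n) → ℝ)
    (h01 : ∀ f, χ f ∈ Set.Icc (0:ℝ) 1)
    (hadd : ∀ (f g : ↥(McN n)) (h : mvAdd f.1 g.1 ∈ McN n),
      χ ⟨mvAdd f.1 g.1, h⟩ = min (χ f + χ g) 1)
    (hneg : ∀ (f : ↥(McN n)) (h : mvNeg f.1 ∈ McN n),
      χ ⟨mvNeg f.1, h⟩ = 1 - χ f) :
    ∃ x₀ : ↥(cubeSet n), ∀ f : ↥(McN n), χ f = f.1 x₀ := by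
  haveI := cube_compactSpace n
  haveI := cube_nonempty n
  set add' : ↥(McN n) → ↥(McN n) → ↥(McN n) :=
    fun f g => ⟨mvAdd f.1 g.1, add_mem f.2 g.2⟩ with hadd'_def
  set neg' : ↥(McN n) → ↥(McN n) := fun f => ⟨mvNeg f.1, neg_mem f.2⟩ with hneg'_def
  have χadd : ∀ f g, χ (add' f g) = min (χ f + χ g) 1 := fun f g => hadd f g _
  have χneg : ∀ f, χ (neg' f) = 1 - χ f := fun f => hneg f _
  set zero' : ↥(McN n) := ⟨fun _ => 0, zero_mem n⟩ with hzero'_def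
  set one' : ↥(McN n) := neg' zero' with hone'_def
  have hone_val : ∀ x, one'.1 x = 1 := by
    intro x
    show mvNeg (fun _ => (0:ℝ)) x = 1
    simp [mvNeg]
  have χzero : χ zero' = 0 := by
    have h1 : add' zero' one' = one' := by
      apply Subtype.ext
      funext x
      show mvAdd (fun _ => (0:ℝ)) (mvNeg (fun _ => (0:ℝ))) x = mvNeg (fun _ => (0:ℝ)) x
      simp [mvAdd, mvNeg]
    have h2 : χ one' = min (χ zero' + χ one') 1 := by rw [← χadd zero' one', h1]
    have h3 : χ one' = 1 - χ zero' := χneg zero'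
    have h0 := h01 zero'
    simp only [Set.mem_Icc] at h0
    rw [h3] at h2
    rcases le_or_gt (χ zero') 0 with h | h
    · linarith [h0.1]
    · rw [min_eq_right (by linarith)] at h2
      linarith
  have χone : χ one' = 1 := by rw [hone'_def, χneg, χzero]; norm_num
  -- bounds for values
  have fval01 : ∀ (f : ↥(McN n)) (x : ↥(cubeSet n)), f.1 x ∈ Set.Icc (0:ℝ) 1 :=
    fun f x => f.2.1 x
  -- zero sets of kernel elements are nonempty
  have claim1 : ∀ f : ↥(McN n), χ f = 0 → ∃ x : ↥(cubeSet n), f.1 x = 0 := by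
    intro f hχf
    by_contra hno
    push_neg at hno
    have hpos : ∀ x, 0 < f.1 x := fun x => lt_of_le_of_ne (fval01 f x).1 (Ne.symm (hno x))
    obtain ⟨z, _, hz⟩ := isCompact_univ.exists_isMinOn Set.univ_nonempty
      (mcn_continuous f.2).continuousOn
    set δ := f.1 z with hδdef
    have hδpos : 0 < δ := hpos z
    have hδle : ∀ y, δ ≤ f.1 y := fun y => hz (Set.mem_univ y)
    obtain ⟨m, hm⟩ := exists_nat_ge (1 / δ)
    have hmδ : 1 ≤ (m : ℝ) * δ := by
      rw [div_le_iff₀ hδpos] at hm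
      linarith
    -- iterated sum
    set F : ℕ → ↥(McN n) := fun k => Nat.rec f (fun _ h => add' h f) k with hF_def
    have hF0 : F 0 = f := rfl
    have hFs : ∀ k, F (k + 1) = add' (F k) f := fun k => rfl
    have χF : ∀ k, χ (F k) = 0 := by
      intro k
      induction k with
      | zero => rw [hF0]; exact hχf
      | succ k ih => rw [hFs, χadd, ih, hχf]; norm_num
    have vF : ∀ (k : ℕ) (x : ↥(cubeSet n)), (F k).1 x = min (((k : ℝ) + 1) * f.1 x) 1 := by
      intro k
      induction k with
      | zero =>
        intro x
        simp only [Nat.cast_zero, zero_add, one_mul]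
        exact (min_eq_left (fval01 f x).2).symm
      | succ k ih =>
        intro x
        have : (F (k+1)).1 x = min ((F k).1 x + f.1 x) 1 := rfl
        rw [this, ih x]
        have hc0 : (0:ℝ) ≤ f.1 x := (fval01 f x).1
        rcases le_total (((k : ℝ) + 1) * f.1 x) 1 with h | h
        · rw [min_eq_left h]
          congr 1
          push_cast
          ring
        · rw [min_eq_right h, min_eq_right (by linarith)]
          symm
          apply min_eq_right
          push_cast
          nlinarith
    have hFm : F m = one' := by
      apply Subtype.ext
      funext x
      rw [vF m x, hone_val x]
      have h1 : (1:ℝ) ≤ ((m : ℝ) + 1) * f.1 x := by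
        have := hδle x
        nlinarith
      exact min_eq_right h1
    have hc := χF m
    rw [hFm, χone] at hc
    exact one_ne_zero hc
  -- the intersection point
  have hinter : ∃ x₀ : ↥(cubeSet n), ∀ f : ↥(McN n), χ f = 0 → f.1 x₀ = 0 := by
    haveI : Nonempty {f : ↥(McN n) // χ f = 0} := ⟨⟨zero', χzero⟩⟩
    set Z : {f : ↥(McN n) // χ f = 0} → Set ↥(cubeSet n) :=
      fun f => {x | f.1.1 x = 0} with hZ_def
    have hdir : Directed (· ⊇ ·) Z := by
      intro f g
      have hker : χ (add' f.1 g.1) = 0 := by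
        rw [χadd, f.2, g.2]; norm_num
      refine ⟨⟨add' f.1 g.1, hker⟩, ?_, ?_⟩ <;>
      · intro x hx
        simp only [hZ_def, Set.mem_setOf_eq] at hx ⊢
        have hv : min (f.1.1 x + g.1.1 x) 1 = 0 := hx
        have h1 := (fval01 f.1 x).1
        have h2 := (fval01 g.1 x).1
        rcases le_total (f.1.1 x + g.1.1 x) 1 with h | h
        · rw [min_eq_left h] at hv; linarith
        · rw [min_eq_right h] at hv; norm_num at hv
    have hne : ∀ f, (Z f).Nonempty := fun f => claim1 f.1 f.2
    have hcl : ∀ f, IsClosed (Z f) :=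
      fun f => isClosed_eq (mcn_continuous f.1.2) continuous_const
    have hcp : ∀ f, IsCompact (Z f) := fun f => (hcl f).isCompact
    obtain ⟨x₀, hx₀⟩ := IsCompact.nonempty_iInter_of_directed_nonempty_isCompact_isClosed
      Z hdir hne hcp hcl
    refine ⟨x₀, fun f hf => ?_⟩
    have := Set.mem_iInter.mp hx₀ ⟨f, hf⟩
    exact this
  obtain ⟨x₀, hx₀⟩ := hinter
  -- main induction: clamped scaled functions
  have main : ∀ (k a : ℕ), a < 2 ^ k → ∀ f : ↥(McN n), ∃ h : ↥(McN n),
      (∀ x, h.1 x = min (max ((2:ℝ) ^ k * f.1 x - a) 0) 1) ∧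
      χ h = min (max ((2:ℝ) ^ k * χ f - a) 0) 1 := by
    intro k
    induction k with
    | zero =>
      intro a ha f
      have ha0 : a = 0 := by omega
      subst ha0
      refine ⟨f, fun x => ?_, ?_⟩
      · have h := fval01 f x
        simp only [pow_zero, one_mul, Nat.cast_zero, sub_zero]
        rw [max_eq_left h.1, min_eq_left h.2]
      · have h := h01 f
        simp only [pow_zero, one_mul, Nat.cast_zero, sub_zero]
        rw [max_eq_left h.1, min_eq_left h.2]
    | succ k ih =>
      intro a ha f
      by_cases hak : a < 2 ^ k
      · obtain ⟨h, hv, hχ⟩ := ih a hak (add' f f)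
        refine ⟨h, fun x => ?_, ?_⟩
        · rw [hv x]
          have : (add' f f).1 x = min (f.1 x + f.1 x) 1 := rfl
          rw [this, L1 _ _ _ hak]
        · rw [hχ, χadd, L1 _ _ _ hak]
      · have hak2 : 2 ^ k ≤ a := not_lt.mp hak
        have ha2 : a - 2 ^ k < 2 ^ k := by
          have : a < 2 ^ (k + 1) := ha
          omega
        set a' := a - 2 ^ k with ha'_def
        have hacast : (a : ℝ) = (2:ℝ) ^ k + (a' : ℝ) := by
          have : a = 2 ^ k + a' := by omega
          rw [this]
          push_cast
          ring
        set sf : ↥(McN n) := neg' (add' (neg' f) (neg' f)) with hsf_def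
        obtain ⟨h, hv, hχ⟩ := ih a' ha2 sf
        have hsf_val : ∀ x, sf.1 x = 1 - min ((1 - f.1 x) + (1 - f.1 x)) 1 := fun x => rfl
        have hsf_χ : χ sf = 1 - min ((1 - χ f) + (1 - χ f)) 1 := by
          rw [hsf_def, χneg, χadd, χneg]
        refine ⟨h, fun x => ?_, ?_⟩
        · rw [hv x, hsf_val x, L2, hacast]
        · rw [hχ, hsf_χ, L2, hacast]
  -- no value can be below the point value
  have half : ∀ f : ↥(McN n), χ f < f.1 x₀ → False := by
    intro f hlt
    set c := χ f with hc_def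
    set v := f.1 x₀ with hv_def
    have hc0 : (0:ℝ) ≤ c := (h01 f).1
    have hv1 : v ≤ 1 := (fval01 f x₀).2
    obtain ⟨k, hk⟩ := exists_pow_lt_of_lt_one (show (0:ℝ) < v - c by linarith)
      (show (1:ℝ)/2 < 1 by norm_num)
    have hpow : (0:ℝ) < 2 ^ k := by positivity
    have hkey : (2:ℝ) ^ k * ((1/2:ℝ) ^ k) = 1 := by
      rw [← mul_pow]; norm_num
    have hk2 : 1 < (2:ℝ) ^ k * (v - c) := by
      have := (mul_lt_mul_iff_right₀ hpow).mpr hk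
      rw [hkey] at this
      linarith [this]
    set a : ℕ := ⌊(2:ℝ) ^ k * c⌋₊ + 1 with ha_def
    have h1 : (2:ℝ) ^ k * c < a := by
      have := Nat.lt_floor_add_one ((2:ℝ) ^ k * c)
      rw [ha_def]
      push_cast
      linarith
    have h2 : (a : ℝ) ≤ (2:ℝ) ^ k * c + 1 := by
      have := Nat.floor_le (show (0:ℝ) ≤ (2:ℝ) ^ k * c by positivity)
      rw [ha_def]
      push_cast
      linarith
    have h3 : (a : ℝ) < (2:ℝ) ^ k * v := by nlinarith
    have ha : a < 2 ^ k := by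
      have hr : (a : ℝ) < (2:ℝ) ^ k := by nlinarith
      by_contra hcon
      push_neg at hcon
      have hcon' : (2:ℝ) ^ k ≤ (a : ℝ) := by exact_mod_cast hcon
      linarith
    obtain ⟨h, hv', hχ'⟩ := main k a ha f
    have hχ0 : χ h = 0 := by
      rw [hχ', max_eq_right (by linarith), min_eq_left (by norm_num)]
    have := hx₀ h hχ0
    rw [hv' x₀] at this
    have hpos : 0 < min (max ((2:ℝ) ^ k * v - a) 0) 1 :=
      lt_min (lt_max_of_lt_left (by linarith)) one_pos
    rw [this] at hpos
    exact lt_irrefl 0 hpos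
  refine ⟨x₀, fun f => ?_⟩
  by_contra hne
  rcases lt_or_gt_of_ne hne with h | h
  · exact half f h
  · apply half (neg' f)
    rw [χneg]
    have : (neg' f).1 x₀ = 1 - f.1 x₀ := rfl
    rw [this]
    linarith

end Stmt19Aux
namespace Stmt19Aux

lemma incomparable_aux {n : ℕ} (σ τ : (Fin n → ℝ) → (Fin n → ℝ))
    (hσ : IsZRetraction σ) (hτ : IsZRetraction τ) (hR : zRange σ = zRange τ)
    (x : Fin n → ℝ) (hx : x ∈ cubeSet n) (i : Fin n) (hne : σ x i ≠ τ x i) :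
    ¬ retAlg σ ⊆ retAlg τ := by
  intro hsub
  set g : ↥(cubeSet n) → ℝ := fun z => z.1 i with hg_def
  have hgM : g ∈ McN n := proj_mem i
  set f : ↥(cubeSet n) → ℝ := fun z => σ z.1 i with hf_def
  have hfσ : f ∈ retAlg σ := ⟨g, hgM, fun z h => rfl⟩
  obtain ⟨g', hg'M, hg'⟩ := hsub hfσ
  have hτx : τ x ∈ cubeSet n := hτ.2.1 hx
  have hττx : τ (τ x) ∈ cubeSet n := hτ.2.1 hτx
  set Y : ↥(cubeSet n) := ⟨τ x, hτx⟩ with hY_def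
  -- evaluation at x
  have e1 : σ x i = g' Y := hg' ⟨x, hx⟩ hτx
  -- evaluation at Y
  have e2 : f Y = g' ⟨τ (τ x), hττx⟩ := hg' Y hττx
  have hττ : τ (τ x) = τ x := hτ.2.2 x hx
  have e3 : g' (⟨τ (τ x), hττx⟩ : ↥(cubeSet n)) = g' Y := by
    congr 1
    exact Subtype.ext hττ
  -- σ fixes the common range
  have hmem : τ x ∈ zRange σ := hR ▸ ⟨x, hx, rfl⟩
  obtain ⟨w, hw, hwτ⟩ := hmem
  have hfix : σ (τ x) = τ x := by
    rw [← hwτ, hσ.2.2 w hw]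
  have e4 : f Y = τ x i := by
    show σ (τ x) i = τ x i
    rw [hfix]
  have : σ x i = τ x i := by
    rw [e1, ← e3, ← e2, e4]
  exact hne this

end Stmt19Aux

open Stmt19Aux

/-- A separating retract of `McN([0,1]^n)` is all of `McN([0,1]^n)`;
moreover, distinct Z-retractions with equal range yield incomparable retracts. -/
theorem stmt19 {n : ℕ} (hn : 1 ≤ n) :
    (∀ A : Set (↥(cubeSet n) → ℝ), (∃ ε, IsMcNRetraction ε A) →
      (∀ x y : ↥(cubeSet n), x ≠ y → ∃ f ∈ A, f x ≠ f y) → A = McN n) ∧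
    (∀ σ τ : (Fin n → ℝ) → (Fin n → ℝ), IsZRetraction σ → IsZRetraction τ →
      zRange σ = zRange τ → ¬ Set.EqOn σ τ (cubeSet n) →
      ¬ retAlg σ ⊆ retAlg τ ∧ ¬ retAlg τ ⊆ retAlg σ) := by
  constructor
  · rintro A ⟨ε, hadd, hneg, hidem, hrange⟩ hsep
    apply Set.Subset.antisymm
    · intro a ha
      rw [← hrange] at ha
      obtain ⟨F, ⟨g0, rfl⟩, rfl⟩ := ha
      exact (ε g0).2
    · intro f hf
      suffices hfix : (ε ⟨f, hf⟩).1 = f by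
        rw [← hrange]
        exact ⟨ε ⟨f, hf⟩, ⟨⟨f, hf⟩, rfl⟩, hfix⟩
      funext x
      set χ : ↥(McN n) → ℝ := fun g => (ε g).1 x with hχ_def
      have h01 : ∀ g, χ g ∈ Set.Icc (0:ℝ) 1 := fun g => (ε g).2.1 x
      have hχadd : ∀ (f' g' : ↥(McN n)) (h : mvAdd f'.1 g'.1 ∈ McN n),
          χ ⟨mvAdd f'.1 g'.1, h⟩ = min (χ f' + χ g') 1 := by
        intro f' g' h
        have := congrFun (hadd f' g' h) x
        simpa [mvAdd] using this
      have hχneg : ∀ (f' : ↥(McN n)) (h : mvNeg f'.1 ∈ McN n),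
          χ ⟨mvNeg f'.1, h⟩ = 1 - χ f' := by
        intro f' h
        have := congrFun (hneg f' h) x
        simpa [mvNeg] using this
      obtain ⟨x₀, hx₀⟩ := exists_point χ h01 hχadd hχneg
      have hAfix : ∀ a ∈ A, a x = a x₀ := by
        intro a ha
        rw [← hrange] at ha
        obtain ⟨F, ⟨g0, rfl⟩, rfl⟩ := ha
        have h1 : χ (ε g0) = (ε g0).1 x₀ := hx₀ (ε g0)
        have h2 : χ (ε g0) = (ε (ε g0)).1 x := rfl
        rw [h2, hidem g0] at h1
        exact h1
      have hxx : x = x₀ := by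
        by_contra hne
        obtain ⟨a, haA, hane⟩ := hsep x x₀ hne
        exact hane (hAfix a haA)
      calc (ε ⟨f, hf⟩).1 x = χ ⟨f, hf⟩ := rfl
        _ = f x₀ := hx₀ ⟨f, hf⟩
        _ = f x := by rw [hxx]
  · intro σ τ hσ hτ hR hneq
    have hx : ∃ x ∈ cubeSet n, σ x ≠ τ x := by
      by_contra hcon
      push_neg at hcon
      exact hneq fun x hx => hcon x hx
    obtain ⟨x, hx, hxy⟩ := hx
    obtain ⟨i, hi⟩ := Function.ne_iff.mp hxy
    exact ⟨incomparable_aux σ τ hσ hτ hR x hx i hi,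
      incomparable_aux τ σ hτ hσ hR.symm x hx i (Ne.symm hi)⟩
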